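/- If L/K is an APF-extension and F is any intermediate field K ⊆ F ⊆ L, then F/K is an APF-extension. -/
import Mathlib

/-- `L/K` is an APF-extension: with `G = G_K` the absolute Galois group of `K`,
`R v = G_K^v` its upper ramification filtration and `HL = G_L` the subgroup fixing `L`,
the condition is `(G_K : G_K^v G_L) < ∞` for all real `v ≥ -1` (the upper ramification
subgroups are normal, so `G_K^v G_L = R v ⊔ HL`). -/
def IsAPF {G : Type*} [Group G] (R : ℝ → Subgroup G) (HL : Subgroup G) : Prop :=
  ∀ v : ℝ, -1 ≤ v → (R v ⊔ HL).index ≠ 0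

/-- If `L/K` is an APF-extension and `F` is any intermediate field
`K ⊆ F ⊆ L` (so that `G_L ≤ G_F ≤ G_K`), then `F/K` is an APF-extension. -/
theorem apf_of_intermediate {G : Type*} [Group G]
    (R : ℝ → Subgroup G) (HF HL : Subgroup G) (hle : HL ≤ HF)
    (hAPF : IsAPF R HL) :
    IsAPF R HF := by
  intro v hv
  have h : R v ⊔ HL ≤ R v ⊔ HF := sup_le_sup_left hle _
  exact fun h0 => hAPF v hv (Nat.eq_zero_of_zero_dvd
    (h0 ▸ Subgroup.index_dvd_of_le h))
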